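/- Let 1 ≤ j ≤ k−1 be integers. There is a constant C' = C'(k,j) > 0, independent of a and m (one may take C' = 9·binom(k,j)²), such that for all integers a > m ≥ 0 we have |M_{a,m}| ≤ (C')^{a−1}. -/

import Mathlib

open Finset Filter

/-- For an `a × (binom(k,j)+1)` matrix `M` of nonnegative integers (rows indexed by
`i ∈ {1,…,a}`, columns indexed by `z ∈ {0,…,binom(k,j)}`),
`fMat M = Σ_i Σ_z z·M i z`. -/
def fMat {a b : ℕ} (M : Fin a → Fin b → ℕ) : ℕ :=
  ∑ i : Fin a, ∑ z : Fin b, (z : ℕ) * M i z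

/-- `gMat M = Σ_i Σ_z M i z`, the sum of all entries of `M`. -/
def gMat {a b : ℕ} (M : Fin a → Fin b → ℕ) : ℕ :=
  ∑ i : Fin a, ∑ z : Fin b, M i z

/-- `matSet k j a m` is the set `M_{a,m}` of all `a × (binom(k,j)+1)` matrices `M` with
nonnegative integer entries satisfying `f(M) = a − 1` and `g(M) = m`. -/
def matSet (k j a m : ℕ) : Set (Fin a → Fin (k.choose j + 1) → ℕ) :=
  {M | fMat M = a - 1 ∧ gMat M = m}

lemma multiset_card_finsetSum {ι α : Type*} (s : Finset ι) (f : ι → Multiset α) :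
    Multiset.card (∑ i ∈ s, f i) = ∑ i ∈ s, Multiset.card (f i) := by
  induction s using Finset.cons_induction with
  | empty => simp
  | cons a s h ih => simp [Finset.sum_cons, ih]

lemma choose_le_two_pow' (n k : ℕ) : n.choose k ≤ 2 ^ n := by
  rcases le_or_gt k n with h | h
  · calc n.choose k ≤ ∑ i ∈ range (n+1), n.choose i :=
        Finset.single_le_sum (fun i _ => Nat.zero_le _) (mem_range.mpr (by omega))
      _ = 2 ^ n := Nat.sum_range_choose n
  · rw [Nat.choose_eq_zero_of_lt h]; exact Nat.zero_le _

/-- **Claim.** Let `1 ≤ j ≤ k−1`.  There is a constant `C' = C'(k,j) > 0`, independent of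
`a` and `m` (one may take `C' = 9·binom(k,j)²`), such that for all integers `a > m ≥ 0` we
have `|M_{a,m}| ≤ (C')^{a−1}`. -/
theorem matSet_card_upper_bound (k j : ℕ) (hj : 1 ≤ j) (hjk : j ≤ k - 1) :
    ∃ C' : ℝ, 0 < C' ∧
      ∀ a m : ℕ, m < a →
        ((matSet k j a m).ncard : ℝ) ≤ C' ^ (a - 1) := by
  have hk : j ≤ k := by omega
  set b := k.choose j + 1 with hbdef
  have hb2 : 2 ≤ b := by have := Nat.choose_pos hk; omega
  refine ⟨(2:ℝ) ^ (2*b), by positivity, ?_⟩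
  intro a m hma
  have hfin : Finite ↥{s : Multiset (Fin a × Fin b) | Multiset.card s = m} := by
    change Finite (Sym (Fin a × Fin b) m); infer_instance
  -- Step 1: `matSet` injects into multisets of size `m` over `Fin a × Fin b`.
  have key : (matSet k j a m).ncard ≤ (a*b + m - 1).choose m := by
    have hle := Set.ncard_le_ncard_of_injOn
      (s := matSet k j a m)
      (t := {s : Multiset (Fin a × Fin b) | Multiset.card s = m})
      (fun M => ∑ p : Fin a, ∑ q : Fin b, Multiset.replicate (M p q) (p, q))
      (by
        intro M hM
        obtain ⟨-, hg⟩ := hM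
        simp only [Set.mem_setOf_eq]
        rw [← hg]
        simp [gMat, multiset_card_finsetSum]; rfl)
      (by
        intro M hM M' hM' hMM'
        funext i z
        have hcount : ∀ (N : Fin a → Fin b → ℕ),
            Multiset.count (i, z)
              (∑ p : Fin a, ∑ q : Fin b, Multiset.replicate (N p q) (p, q)) = N i z := by
          intro N
          simp [Multiset.count_sum', Multiset.count_replicate, Prod.ext_iff, ite_and,
            Finset.sum_ite_eq, Finset.sum_ite_eq']
        have := congrArg (Multiset.count (i, z)) hMM'
        simp only at this
        rw [hcount, hcount] at this
        exact this)
      (Set.finite_coe_iff.mp hfin)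
    refine hle.trans ?_
    have h1 : {s : Multiset (Fin a × Fin b) | Multiset.card s = m}.ncard
        = Fintype.card (Sym (Fin a × Fin b) m) := by
      rw [← Nat.card_coe_set_eq]
      exact Nat.card_eq_fintype_card (α := Sym (Fin a × Fin b) m)
    rw [h1, Sym.card_sym_eq_multichoose, Nat.multichoose_eq]
    simp
  -- Step 2: numeric bound on the binomial coefficient.
  have hchoose : (a*b + m - 1).choose m ≤ 2 ^ (2*b*(a-1)) := by
    rcases eq_or_lt_of_le (Nat.one_le_iff_ne_zero.mpr (by omega : a ≠ 0)) with h1 | h2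
    · have hm0 : m = 0 := by omega
      subst hm0
      simpa using Nat.one_le_two_pow
    · calc (a*b + m - 1).choose m ≤ 2 ^ (a*b + m - 1) := choose_le_two_pow' _ _
        _ ≤ 2 ^ (2*b*(a-1)) := by
            apply Nat.pow_le_pow_right (by norm_num)
            have hm : m ≤ a - 1 := by omega
            obtain ⟨n, rfl⟩ : ∃ n, a = n + 1 := ⟨a - 1, by omega⟩
            obtain ⟨d, rfl⟩ : ∃ d, n = d + 1 := ⟨n - 1, by omega⟩
            clear_value b
            clear hbdef hfin key
            obtain ⟨c, rfl⟩ : ∃ c, b = c + 2 := ⟨b - 2, by omega⟩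
            simp only [Nat.add_sub_cancel] at hm ⊢
            have h0 : 0 ≤ c * d := Nat.zero_le _
            rw [Nat.sub_le_iff_le_add]
            nlinarith [h0, hm]
  calc ((matSet k j a m).ncard : ℝ) ≤ ((a*b + m - 1).choose m : ℕ) := by exact_mod_cast key
    _ ≤ ((2 ^ (2*b*(a-1)) : ℕ) : ℝ) := by exact_mod_cast hchoose
    _ = ((2:ℝ) ^ (2*b)) ^ (a-1) := by push_cast [← pow_mul]; ring
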